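/- Dual diamond norm is multiplicative on tensor products: For Hermitian operators K on H_A and L on H_B, the Hölder dual of the strategy 1-norm satisfies ‖K ⊗ L‖*_{◇1} = ‖K‖₁ · ‖L‖_∞, where ‖K⊗L‖*_{◇1} = inf{Tr[Y] : Y ≥ 0 on H_A, −Y⊗I_B ≤ K⊗L ≤ Y⊗I_B}. -/

import Mathlib

open Matrix Kronecker
open scoped ComplexOrder

/-- The Hölder dual of the strategy 1-norm (dual diamond norm) of a Hermitian operator `H`
on `H_A ⊗ H_B`: `‖H‖*_{◇1} = inf{Tr Y : Y ≥ 0 on H_A, −Y⊗I ≤ H ≤ Y⊗I}`. -/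
noncomputable def dualDiamondNorm {a b : ℕ}
    (H : Matrix (Fin a × Fin b) (Fin a × Fin b) ℂ) : ℝ :=
  sInf {t : ℝ | ∃ Y : Matrix (Fin a) (Fin a) ℂ, Y.PosSemidef ∧
    ((Y ⊗ₖ (1 : Matrix (Fin b) (Fin b) ℂ)) - H).PosSemidef ∧
    (H + Y ⊗ₖ (1 : Matrix (Fin b) (Fin b) ℂ)).PosSemidef ∧
    t = Y.trace.re}

/-- The trace norm of a Hermitian `K`, via its variational characterization
`‖K‖₁ = inf{t ≥ 0 : ∃ σ ≥ 0, Tr σ = 1, −tσ ≤ K ≤ tσ}`. -/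
noncomputable def traceNormVar {a : ℕ} (K : Matrix (Fin a) (Fin a) ℂ) : ℝ :=
  sInf {t : ℝ | 0 ≤ t ∧ ∃ σ : Matrix (Fin a) (Fin a) ℂ, σ.PosSemidef ∧ σ.trace = 1 ∧
    ((t : ℂ) • σ - K).PosSemidef ∧ (K + (t : ℂ) • σ).PosSemidef}

/-- The spectral norm of a Hermitian `L`, via `‖L‖_∞ = inf{t ≥ 0 : −tI ≤ L ≤ tI}`. -/
noncomputable def specNormVar {b : ℕ} (L : Matrix (Fin b) (Fin b) ℂ) : ℝ :=
  sInf {t : ℝ | 0 ≤ t ∧ ((t : ℂ) • (1 : Matrix (Fin b) (Fin b) ℂ) - L).PosSemidef ∧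
    (L + (t : ℂ) • (1 : Matrix (Fin b) (Fin b) ℂ)).PosSemidef}

namespace DDNAux

variable {n m : Type*} [Fintype n] [Fintype m]

lemma posSemidef_of_isEmpty [IsEmpty n] (M : Matrix n n ℂ) : M.PosSemidef := by
  constructor
  · ext i j; exact isEmptyElim i
  · intro x; rw [Finsupp.sum, Finset.eq_empty_of_isEmpty x.support]; simp

lemma psd_zero : (0 : Matrix n n ℂ).PosSemidef := by
  constructor
  · simp [Matrix.IsHermitian]
  · intro x; simp

lemma smul_psd {c : ℝ} (hc : 0 ≤ c) {M : Matrix n n ℂ} (hM : M.PosSemidef) :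
    ((c : ℂ) • M).PosSemidef := by
  constructor
  · show ((c:ℂ) • M)ᴴ = _
    rw [conjTranspose_smul, hM.1]
    norm_num
  · exact (hM.smul (a := (c:ℂ)) (by exact_mod_cast hc)).2

omit [Fintype n] [Fintype m] in
lemma kron_conjTranspose (A : Matrix n n ℂ) (B : Matrix m m ℂ) :
    (A ⊗ₖ B)ᴴ = Aᴴ ⊗ₖ Bᴴ := by
  ext ⟨i, k⟩ ⟨j, l⟩
  simp [conjTranspose_apply, star_mul']

lemma kron_psd {A : Matrix n n ℂ} {B : Matrix m m ℂ} (hA : A.PosSemidef)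
    (hB : B.PosSemidef) : (A ⊗ₖ B).PosSemidef := by
  exact hA.kronecker hB

lemma psd_diag_nonneg {M : Matrix n n ℂ} [DecidableEq n] (hM : M.PosSemidef) (i : n) :
    0 ≤ M i i := by
  exact hM.diag_nonneg

lemma psd_trace_nonneg {M : Matrix n n ℂ} (hM : M.PosSemidef) : 0 ≤ M.trace := by
  classical
  exact Finset.sum_nonneg fun i _ => psd_diag_nonneg hM i

lemma psd_trace_eq_re {M : Matrix n n ℂ} (hM : M.PosSemidef) :
    M.trace = (M.trace.re : ℂ) := by
  have h := psd_trace_nonneg hM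
  rw [Complex.le_def] at h
  exact Complex.ext rfl (by simpa using h.2.symm)

lemma psd_trace_re_nonneg {M : Matrix n n ℂ} (hM : M.PosSemidef) : 0 ≤ M.trace.re := by
  have h := psd_trace_nonneg hM
  rw [Complex.le_def] at h
  simpa using h.1

lemma psd_trace_zero {M : Matrix n n ℂ} (hM : M.PosSemidef) (h : M.trace = 0) :
    M = 0 := by
  exact hM.trace_eq_zero_iff.mp h

variable [DecidableEq n]

lemma eq_zero_of_eigs_zero {M : Matrix n n ℂ} (hM : M.IsHermitian)
    (h : ∀ i, hM.eigenvalues i = 0) : M = 0 := by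
  have hs := hM.spectral_theorem
  have hd : Matrix.diagonal (RCLike.ofReal ∘ hM.eigenvalues : n → ℂ) = 0 := by
    ext i j
    by_cases hij : i = j <;> simp [Matrix.diagonal_apply, hij, h]
  rw [hs, hd, map_zero]

lemma shift_psd {M : Matrix n n ℂ} (hM : M.IsHermitian) {t : ℝ}
    (h : ∀ i, |hM.eigenvalues i| ≤ t) :
    ((t:ℂ) • 1 - M).PosSemidef ∧ (M + (t:ℂ) • 1).PosSemidef := by
  set U : Matrix n n ℂ := (hM.eigenvectorUnitary : Matrix n n ℂ) with hUdef
  have hU : U * star U = 1 := Matrix.mem_unitaryGroup_iff.mp hM.eigenvectorUnitary.2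
  have hsmul : ∀ c : ℝ, (c:ℂ) • (1 : Matrix n n ℂ)
      = U * Matrix.diagonal (fun _ => (c:ℂ)) * star U := by
    intro c
    rw [← Matrix.smul_one_eq_diagonal]
    rw [Matrix.mul_smul, mul_one, Matrix.smul_mul, hU]
  have key : ∀ d : n → ℝ, (∀ i, 0 ≤ d i) →
      (U * Matrix.diagonal (fun i => ((d i : ℝ) : ℂ)) * star U).PosSemidef := by
    intro d hd
    rw [Matrix.star_eq_conjTranspose]
    exact (Matrix.posSemidef_diagonal_iff.mpr fun i => by
      simpa using Complex.zero_le_real.mpr (hd i)).mul_mul_conjTranspose_same U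
  constructor
  · have e1 : (t:ℂ) • (1 : Matrix n n ℂ) - M
        = U * Matrix.diagonal (fun i => ((t - hM.eigenvalues i : ℝ) : ℂ)) * star U := by
      conv_lhs => rw [hM.spectral_theorem, Unitary.conjStarAlgAut_apply, hsmul t]
      rw [← Matrix.sub_mul, ← Matrix.mul_sub]
      congr 2
      rw [Matrix.diagonal_sub]
      congr 1
      ext i
      push_cast
      rfl
    rw [e1]
    exact key _ fun i => sub_nonneg.mpr (abs_le.mp (h i)).2
  · have e2 : M + (t:ℂ) • (1 : Matrix n n ℂ)
        = U * Matrix.diagonal (fun i => ((hM.eigenvalues i + t : ℝ) : ℂ)) * star U := by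
      conv_lhs => rw [hM.spectral_theorem, Unitary.conjStarAlgAut_apply, hsmul t]
      rw [← Matrix.add_mul, ← Matrix.mul_add]
      congr 2
      rw [Matrix.diagonal_add]
      congr 1
      ext i
      push_cast
      rfl
    rw [e2]
    exact key _ fun i => by linarith [(abs_le.mp (h i)).1]

noncomputable def emb {a b : ℕ} (v : Fin b → ℂ) : Matrix (Fin a × Fin b) (Fin a) ℂ :=
  Matrix.of fun p j => if p.1 = j then v p.2 else 0

lemma emb_pinch_kron {a b : ℕ} (v : Fin b → ℂ) (M : Matrix (Fin a) (Fin a) ℂ)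
    (N : Matrix (Fin b) (Fin b) ℂ) :
    (emb (a := a) v)ᴴ * (M ⊗ₖ N) * emb (a := a) v = (star v ⬝ᵥ N *ᵥ v) • M := by
  ext i j
  simp only [Matrix.mul_apply, Matrix.conjTranspose_apply, emb, Matrix.of_apply,
    Matrix.smul_apply, Matrix.kroneckerMap_apply, smul_eq_mul, dotProduct,
     Matrix.mulVec, Pi.star_apply, Fintype.sum_prod_type, apply_ite, star_zero,
    ite_mul, mul_ite, zero_mul, mul_zero, Finset.sum_ite_eq, Finset.sum_ite_eq',
    Finset.mem_univ, if_true, Finset.sum_ite_irrel, Finset.sum_const_zero]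
  simp only [Finset.sum_mul, Finset.mul_sum]
  rw [Finset.sum_comm]
  refine Finset.sum_congr rfl fun k _ => Finset.sum_congr rfl fun l _ => ?_
  ring

lemma le_sInf_mul_sInf {T S : Set ℝ} (hTne : T.Nonempty) (hSne : S.Nonempty)
    (hT0 : ∀ t ∈ T, 0 ≤ t) (hS0 : ∀ s ∈ S, 0 ≤ s) {D : ℝ}
    (h : ∀ t ∈ T, ∀ s ∈ S, D ≤ t * s) : D ≤ sInf T * sInf S := by
  have hTn : 0 ≤ sInf T := Real.sInf_nonneg hT0
  have hSn : 0 ≤ sInf S := Real.sInf_nonneg hS0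
  have step : ∀ t ∈ T, D ≤ t * sInf S := by
    intro t ht
    rcases eq_or_lt_of_le (hT0 t ht) with h0 | hpos
    · obtain ⟨s, hs⟩ := hSne
      have := h t ht s hs
      nlinarith [hS0 s hs]
    · have hd : D / t ≤ sInf S := by
        apply le_csInf hSne
        intro s hs
        rw [div_le_iff₀ hpos]
        calc D ≤ t * s := h t ht s hs
        _ = s * t := mul_comm _ _
      calc D = D / t * t := by field_simp
      _ ≤ sInf S * t := by exact mul_le_mul_of_nonneg_right hd hpos.le
      _ = t * sInf S := mul_comm _ _
  rcases eq_or_lt_of_le hSn with h0 | hpos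
  · obtain ⟨t, ht⟩ := hTne
    have := step t ht
    nlinarith [hT0 t ht]
  · have hd : D / sInf S ≤ sInf T := by
      apply le_csInf hTne
      intro t ht
      rw [div_le_iff₀ hpos]
      exact step t ht
    calc D = D / sInf S * sInf S := by field_simp
    _ ≤ sInf T * sInf S := mul_le_mul_of_nonneg_right hd hpos.le

/-- The set underlying `dualDiamondNorm`. -/
def DS {a b : ℕ} (H : Matrix (Fin a × Fin b) (Fin a × Fin b) ℂ) : Set ℝ :=
  {t : ℝ | ∃ Y : Matrix (Fin a) (Fin a) ℂ, Y.PosSemidef ∧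
    ((Y ⊗ₖ (1 : Matrix (Fin b) (Fin b) ℂ)) - H).PosSemidef ∧
    (H + Y ⊗ₖ (1 : Matrix (Fin b) (Fin b) ℂ)).PosSemidef ∧
    t = Y.trace.re}

/-- The set underlying `traceNormVar`. -/
def TS {a : ℕ} (K : Matrix (Fin a) (Fin a) ℂ) : Set ℝ :=
  {t : ℝ | 0 ≤ t ∧ ∃ σ : Matrix (Fin a) (Fin a) ℂ, σ.PosSemidef ∧ σ.trace = 1 ∧
    ((t : ℂ) • σ - K).PosSemidef ∧ (K + (t : ℂ) • σ).PosSemidef}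

/-- The set underlying `specNormVar`. -/
def SS {b : ℕ} (L : Matrix (Fin b) (Fin b) ℂ) : Set ℝ :=
  {t : ℝ | 0 ≤ t ∧ ((t : ℂ) • (1 : Matrix (Fin b) (Fin b) ℂ) - L).PosSemidef ∧
    (L + (t : ℂ) • (1 : Matrix (Fin b) (Fin b) ℂ)).PosSemidef}

lemma dd_eq {a b : ℕ} (H : Matrix (Fin a × Fin b) (Fin a × Fin b) ℂ) :
    dualDiamondNorm H = sInf (DS H) := rfl

lemma tn_eq {a : ℕ} (K : Matrix (Fin a) (Fin a) ℂ) :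
    traceNormVar K = sInf (TS K) := rfl

lemma sn_eq {b : ℕ} (L : Matrix (Fin b) (Fin b) ℂ) :
    specNormVar L = sInf (SS L) := rfl

lemma DS_nonneg {a b : ℕ} (H : Matrix (Fin a × Fin b) (Fin a × Fin b) ℂ) :
    ∀ x ∈ DS H, 0 ≤ x := by
  rintro x ⟨Y, hY, -, -, rfl⟩
  exact psd_trace_re_nonneg hY

lemma SS_nonempty {b : ℕ} {L : Matrix (Fin b) (Fin b) ℂ} (hL : L.IsHermitian) :
    (SS L).Nonempty := by
  rcases isEmpty_or_nonempty (Fin b) with h | h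
  · exact ⟨0, le_refl 0, posSemidef_of_isEmpty _, posSemidef_of_isEmpty _⟩
  · set t := Finset.univ.sup' Finset.univ_nonempty fun i => |hL.eigenvalues i| with ht
    have hbd : ∀ i, |hL.eigenvalues i| ≤ t := fun i => by
      rw [ht]; exact Finset.le_sup' (fun i => |hL.eigenvalues i|) (Finset.mem_univ i)
    have h0 : 0 ≤ t := le_trans (abs_nonneg _) (hbd (Classical.arbitrary _))
    obtain ⟨h1, h2⟩ := shift_psd hL hbd
    exact ⟨t, h0, h1, h2⟩

end DDNAux

open DDNAux in
/-- Lemma B.1: the dual diamond norm is multiplicative on tensor products of Hermitian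
operators: `‖K ⊗ L‖*_{◇1} = ‖K‖₁ · ‖L‖_∞`. -/
theorem dualDiamondNorm_kronecker (a b : ℕ)
    (K : Matrix (Fin a) (Fin a) ℂ) (L : Matrix (Fin b) (Fin b) ℂ)
    (hK : K.IsHermitian) (hL : L.IsHermitian) :
    dualDiamondNorm (K ⊗ₖ L) = traceNormVar K * specNormVar L := by
  classical
  rw [dd_eq, tn_eq, sn_eq]
  have hDbdd : BddBelow (DS (K ⊗ₖ L)) := ⟨0, fun x hx => DS_nonneg _ x hx⟩
  have hTbdd : BddBelow (TS K) := ⟨0, fun x hx => hx.1⟩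
  have hSbdd : BddBelow (SS L) := ⟨0, fun x hx => hx.1⟩
  have hSne : (SS L).Nonempty := SS_nonempty hL
  have hS0 : 0 ≤ sInf (SS L) := Real.sInf_nonneg fun x hx => hx.1
  have hT0 : 0 ≤ sInf (TS K) := Real.sInf_nonneg fun x hx => hx.1
  rcases Nat.eq_zero_or_pos a with ha | ha
  · subst ha
    have hTe : TS K = ∅ := by
      ext t
      simp only [TS, Set.mem_setOf_eq, Set.mem_empty_iff_false, iff_false, not_and]
      rintro - ⟨σ, -, hσ1, -⟩
      rw [Matrix.trace_eq_zero_of_isEmpty σ] at hσ1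
      exact one_ne_zero hσ1.symm
    have h0mem : (0:ℝ) ∈ DS (K ⊗ₖ L) := by
      refine ⟨0, psd_zero, posSemidef_of_isEmpty _, posSemidef_of_isEmpty _, ?_⟩
      simp
    have hDzero : sInf (DS (K ⊗ₖ L)) = 0 :=
      le_antisymm (csInf_le hDbdd h0mem) (Real.sInf_nonneg (DS_nonneg _))
    rw [hDzero, hTe, Real.sInf_empty, zero_mul]
  rcases Nat.eq_zero_or_pos b with hb | hb
  · subst hb
    have hSzero : sInf (SS L) = 0 :=
      le_antisymm (csInf_le hSbdd
        ⟨le_refl 0, posSemidef_of_isEmpty _, posSemidef_of_isEmpty _⟩) hS0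
    have h0mem : (0:ℝ) ∈ DS (K ⊗ₖ L) := by
      refine ⟨0, psd_zero, posSemidef_of_isEmpty _, posSemidef_of_isEmpty _, ?_⟩
      simp
    have hDzero : sInf (DS (K ⊗ₖ L)) = 0 :=
      le_antisymm (csInf_le hDbdd h0mem) (Real.sInf_nonneg (DS_nonneg _))
    rw [hDzero, hSzero, mul_zero]
  -- main case : `a > 0` and `b > 0`
  haveI : Nonempty (Fin a) := ⟨⟨0, ha⟩⟩
  haveI : Nonempty (Fin b) := ⟨⟨0, hb⟩⟩
  have haC : ((a:ℝ):ℂ) ≠ 0 := by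
    exact_mod_cast Nat.cast_ne_zero.mpr (Nat.pos_iff_ne_zero.mp ha)
  have hKL : (K ⊗ₖ L).IsHermitian := by
    show (K ⊗ₖ L)ᴴ = K ⊗ₖ L
    rw [kron_conjTranspose, hK.eq, hL.eq]
  -- `TS K` is nonempty
  have hTne : (TS K).Nonempty := by
    set t := Finset.univ.sup' Finset.univ_nonempty fun i => |hK.eigenvalues i| with htdef
    have hbd : ∀ i, |hK.eigenvalues i| ≤ t := fun i => by
      rw [htdef]; exact Finset.le_sup' (fun i => |hK.eigenvalues i|) (Finset.mem_univ i)
    have ht0 : 0 ≤ t := le_trans (abs_nonneg _) (hbd (Classical.arbitrary _))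
    obtain ⟨h1, h2⟩ := shift_psd hK hbd
    refine ⟨(a : ℝ) * t, mul_nonneg (Nat.cast_nonneg a) ht0,
      (((a:ℝ)⁻¹ : ℝ) : ℂ) • 1, smul_psd (by positivity) (Matrix.PosSemidef.one), ?_, ?_, ?_⟩
    · rw [Matrix.trace_smul, Matrix.trace_one, Fintype.card_fin, smul_eq_mul]
      push_cast
      field_simp
    · have e : (((a : ℝ) * t : ℝ) : ℂ) • ((((a:ℝ)⁻¹ : ℝ) : ℂ) • (1 : Matrix (Fin a) (Fin a) ℂ))
          = (t : ℂ) • 1 := by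
        rw [smul_smul]
        congr 1
        push_cast
        field_simp
      rw [e]; exact h1
    · have e : (((a : ℝ) * t : ℝ) : ℂ) • ((((a:ℝ)⁻¹ : ℝ) : ℂ) • (1 : Matrix (Fin a) (Fin a) ℂ))
          = (t : ℂ) • 1 := by
        rw [smul_smul]
        congr 1
        push_cast
        field_simp
      rw [e]; exact h2
  -- `DS (K ⊗ₖ L)` is nonempty
  have hDne : (DS (K ⊗ₖ L)).Nonempty := by
    set tM := Finset.univ.sup' Finset.univ_nonempty fun i => |hKL.eigenvalues i| with htM
    have hbd : ∀ i, |hKL.eigenvalues i| ≤ tM := fun i => by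
      rw [htM]; exact Finset.le_sup' (fun i => |hKL.eigenvalues i|) (Finset.mem_univ i)
    have htM0 : 0 ≤ tM := le_trans (abs_nonneg _) (hbd (Classical.arbitrary _))
    obtain ⟨h1, h2⟩ := shift_psd hKL hbd
    have hkron : ((tM : ℂ) • (1 : Matrix (Fin a) (Fin a) ℂ)) ⊗ₖ (1 : Matrix (Fin b) (Fin b) ℂ)
        = (tM : ℂ) • (1 : Matrix (Fin a × Fin b) (Fin a × Fin b) ℂ) := by
      rw [Matrix.smul_kronecker, Matrix.one_kronecker_one]
    refine ⟨((tM : ℂ) • (1 : Matrix (Fin a) (Fin a) ℂ)).trace.re,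
      (tM : ℂ) • 1, smul_psd htM0 Matrix.PosSemidef.one, ?_, ?_, rfl⟩
    · rw [hkron]; exact h1
    · rw [hkron]; exact h2
  refine le_antisymm ?_ ?_
  · -- `‖K ⊗ L‖*_{◇1} ≤ ‖K‖₁ ‖L‖_∞`
    apply le_sInf_mul_sInf hTne hSne (fun t ht => ht.1) (fun s hs => hs.1)
    rintro t ⟨ht0, σ, hσ, hσtr, hA, hB⟩ s ⟨hs0, hC, hD2⟩
    apply csInf_le hDbdd
    refine ⟨((t * s : ℝ) : ℂ) • σ, smul_psd (mul_nonneg ht0 hs0) hσ, ?_, ?_, ?_⟩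
    · have key : ((((t * s : ℝ) : ℂ) • σ) ⊗ₖ (1 : Matrix (Fin b) (Fin b) ℂ)) - K ⊗ₖ L
          = (((2:ℝ)⁻¹ : ℝ) : ℂ) • ((((t:ℂ) • σ - K) ⊗ₖ (L + (s:ℂ) • 1))
            + ((K + (t:ℂ) • σ) ⊗ₖ ((s:ℂ) • 1 - L))) := by
        ext ⟨i, k⟩ ⟨j, l⟩
        simp only [Matrix.sub_apply, Matrix.add_apply, Matrix.smul_apply,
          Matrix.kroneckerMap_apply, smul_eq_mul]
        push_cast
        ring
      rw [key]
      exact smul_psd (by norm_num) ((kron_psd hA hD2).add (kron_psd hB hC))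
    · have key : K ⊗ₖ L + ((((t * s : ℝ) : ℂ) • σ) ⊗ₖ (1 : Matrix (Fin b) (Fin b) ℂ))
          = (((2:ℝ)⁻¹ : ℝ) : ℂ) • ((((t:ℂ) • σ - K) ⊗ₖ ((s:ℂ) • 1 - L))
            + ((K + (t:ℂ) • σ) ⊗ₖ (L + (s:ℂ) • 1))) := by
        ext ⟨i, k⟩ ⟨j, l⟩
        simp only [Matrix.sub_apply, Matrix.add_apply, Matrix.smul_apply,
          Matrix.kroneckerMap_apply, smul_eq_mul]
        push_cast
        ring
      rw [key]
      exact smul_psd (by norm_num) ((kron_psd hA hC).add (kron_psd hB hD2))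
    · rw [Matrix.trace_smul, hσtr, smul_eq_mul, mul_one]
      simp
  · -- `‖K‖₁ ‖L‖_∞ ≤ ‖K ⊗ L‖*_{◇1}`
    apply le_csInf hDne
    rintro d ⟨Y, hY, hP1, hP2, rfl⟩
    obtain ⟨i₀, -, hi₀⟩ := Finset.exists_mem_eq_sup' Finset.univ_nonempty
      fun i => |hL.eigenvalues i|
    set tS := Finset.univ.sup' Finset.univ_nonempty fun i => |hL.eigenvalues i| with htS
    have hbd : ∀ i, |hL.eigenvalues i| ≤ tS := fun i => by
      rw [htS]; exact Finset.le_sup' (fun i => |hL.eigenvalues i|) (Finset.mem_univ i)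
    have htS0 : 0 ≤ tS := le_trans (abs_nonneg _) (hbd i₀)
    have hSle : sInf (SS L) ≤ tS :=
      csInf_le hSbdd ⟨htS0, (shift_psd hL hbd).1, (shift_psd hL hbd).2⟩
    have hd0 : 0 ≤ Y.trace.re := psd_trace_re_nonneg hY
    rcases eq_or_lt_of_le htS0 with h0 | hpos
    · have hS0' : sInf (SS L) = 0 := le_antisymm (h0 ▸ hSle) hS0
      rw [hS0', mul_zero]
      exact hd0
    · -- `tS > 0`
      set lam := hL.eigenvalues i₀ with hlamdef
      have hlamabs : |lam| = tS := hi₀.symm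
      have hlamne : lam ≠ 0 := by
        intro h
        rw [h, abs_zero] at hlamabs
        exact absurd hlamabs.symm hpos.ne'
      have hlamC : ((lam : ℝ) : ℂ) ≠ 0 := by exact_mod_cast hlamne
      set v : Fin b → ℂ := ⇑(hL.eigenvectorBasis i₀) with hvdef
      have hv1 : star v ⬝ᵥ v = 1 := by
        have horth := hL.eigenvectorBasis.orthonormal
        rw [orthonormal_iff_ite] at horth
        have h := horth i₀ i₀
        simp only [if_true, eq_self_iff_true] at h
        rw [EuclideanSpace.inner_eq_star_dotProduct] at h
        rw [dotProduct_comm] at h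
        exact h
      have hv2 : star v ⬝ᵥ (L *ᵥ v) = (lam : ℂ) := by
        rw [hvdef, hL.mulVec_eigenvectorBasis, dotProduct_smul, ← hvdef, hv1]
        simp [Complex.real_smul]
        exact hlamdef.symm
      have e1 : (emb (a := a) v)ᴴ * ((Y ⊗ₖ (1 : Matrix (Fin b) (Fin b) ℂ)) - K ⊗ₖ L) * emb (a := a) v
          = Y - ((lam : ℝ) : ℂ) • K := by
        rw [Matrix.mul_sub, Matrix.sub_mul, emb_pinch_kron, emb_pinch_kron,
          Matrix.one_mulVec, hv1, hv2, one_smul]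
      have e2 : (emb (a := a) v)ᴴ * (K ⊗ₖ L + (Y ⊗ₖ (1 : Matrix (Fin b) (Fin b) ℂ))) * emb (a := a) v
          = ((lam : ℝ) : ℂ) • K + Y := by
        rw [Matrix.mul_add, Matrix.add_mul, emb_pinch_kron, emb_pinch_kron,
          Matrix.one_mulVec, hv1, hv2, one_smul]
      have P1 : (Y - ((lam : ℝ) : ℂ) • K).PosSemidef :=
        e1 ▸ hP1.conjTranspose_mul_mul_same (emb v)
      have P2 : (((lam : ℝ) : ℂ) • K + Y).PosSemidef :=
        e2 ▸ hP2.conjTranspose_mul_mul_same (emb v)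
      set r := Y.trace.re with hrdef
      have htr : Y.trace = (r : ℂ) := psd_trace_eq_re hY
      rcases eq_or_lt_of_le hd0 with hr0 | hrpos
      · -- `Tr Y = 0`, hence `Y = 0` and `K = 0`
        have hY0 : Y = 0 := psd_trace_zero hY (by rw [htr, ← hr0]; simp)
        have h1 : (((lam : ℝ) : ℂ) • K).PosSemidef := by
          have := P2; rw [hY0, add_zero] at this; exact this
        have h2 : (-(((lam : ℝ) : ℂ) • K)).PosSemidef := by
          have := P1; rw [hY0, zero_sub] at this; exact this
        have htr0 : (((lam : ℝ) : ℂ) • K).trace = 0 := by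
          have t1 := psd_trace_nonneg h1
          have t2 := psd_trace_nonneg h2
          rw [Matrix.trace_neg] at t2
          have := neg_nonneg.mp t2
          exact le_antisymm this t1
        have hK0 : K = 0 := by
          have := psd_trace_zero h1 htr0
          rcases smul_eq_zero.mp this with h | h
          · exact absurd h hlamC
          · exact h
        have hT00 : sInf (TS K) = 0 := by
          refine le_antisymm (csInf_le hTbdd ?_) hT0
          refine ⟨le_refl 0, (((a:ℝ)⁻¹ : ℝ) : ℂ) • 1,
            smul_psd (by positivity) Matrix.PosSemidef.one, ?_, ?_, ?_⟩
          · rw [Matrix.trace_smul, Matrix.trace_one, Fintype.card_fin, smul_eq_mul]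
            push_cast
            field_simp
          · rw [hK0]
            simpa using psd_zero
          · rw [hK0]
            simpa using psd_zero
        rw [hT00, zero_mul]
        exact hd0
      · -- `Tr Y > 0`
        have hrne : (r : ℝ) ≠ 0 := hrpos.ne'
        have hrC : ((r : ℝ) : ℂ) ≠ 0 := by exact_mod_cast hrne
        have htSC : ((tS : ℝ) : ℂ) ≠ 0 := by exact_mod_cast hpos.ne'
        set σ := (((r⁻¹ : ℝ)) : ℂ) • Y with hσdef
        have hσ : σ.PosSemidef := smul_psd (inv_nonneg.mpr hrpos.le) hY
        have hσtr : σ.trace = 1 := by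
          rw [hσdef, Matrix.trace_smul, htr, smul_eq_mul]
          push_cast
          field_simp
        have hmem : (r / tS : ℝ) ∈ TS K := by
          refine ⟨div_nonneg hrpos.le htS0, σ, hσ, hσtr, ?_, ?_⟩
          · rcases lt_or_gt_of_ne hlamne with hneg | hposl
            · have hts : tS = -lam := by rw [← hlamabs, abs_of_neg hneg]
              have eq1 : ((r / tS : ℝ) : ℂ) • σ - K
                  = (((tS⁻¹ : ℝ)) : ℂ) • (((lam : ℝ) : ℂ) • K + Y) := by
                rw [hσdef, hts]
                ext i j
                simp only [Matrix.smul_apply, Matrix.sub_apply, Matrix.add_apply, smul_eq_mul]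
                push_cast
                field_simp
                ring
              rw [eq1]
              exact smul_psd (inv_nonneg.mpr htS0) P2
            · have hts : tS = lam := by rw [← hlamabs, abs_of_pos hposl]
              have eq1 : ((r / tS : ℝ) : ℂ) • σ - K
                  = (((tS⁻¹ : ℝ)) : ℂ) • (Y - ((lam : ℝ) : ℂ) • K) := by
                rw [hσdef, hts]
                ext i j
                simp only [Matrix.smul_apply, Matrix.sub_apply, smul_eq_mul]
                push_cast
                field_simp
              rw [eq1]
              exact smul_psd (inv_nonneg.mpr htS0) P1
          · rcases lt_or_gt_of_ne hlamne with hneg | hposl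
            · have hts : tS = -lam := by rw [← hlamabs, abs_of_neg hneg]
              have eq1 : K + ((r / tS : ℝ) : ℂ) • σ
                  = (((tS⁻¹ : ℝ)) : ℂ) • (Y - ((lam : ℝ) : ℂ) • K) := by
                rw [hσdef, hts]
                ext i j
                simp only [Matrix.smul_apply, Matrix.sub_apply, Matrix.add_apply, smul_eq_mul]
                push_cast
                field_simp
                ring
              rw [eq1]
              exact smul_psd (inv_nonneg.mpr htS0) P1
            · have hts : tS = lam := by rw [← hlamabs, abs_of_pos hposl]
              have eq1 : K + ((r / tS : ℝ) : ℂ) • σ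
                  = (((tS⁻¹ : ℝ)) : ℂ) • (((lam : ℝ) : ℂ) • K + Y) := by
                rw [hσdef, hts]
                ext i j
                simp only [Matrix.smul_apply, Matrix.sub_apply, Matrix.add_apply, smul_eq_mul]
                push_cast
                field_simp
              rw [eq1]
              exact smul_psd (inv_nonneg.mpr htS0) P2
        have hTle : sInf (TS K) ≤ r / tS := csInf_le hTbdd hmem
        calc sInf (TS K) * sInf (SS L) ≤ sInf (TS K) * tS :=
              mul_le_mul_of_nonneg_left hSle hT0
          _ ≤ r / tS * tS := mul_le_mul_of_nonneg_right hTle htS0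
          _ = r := by field_simp
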